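/- Lower bound on ASAp sampling probabilities: let w_{1:n} ∈ L with Q(w_{1:n}) > 0. For any finite sample set S ⊆ L and any position j ≤ n, the ASAp conditional satisfies Q̃_S(w_j | w_{1:j-1}) ≥ P(w_j | w_{1:j-1}) · c(w_{1:j}), a positive constant independent of S. Consequently Q̃_S(w_{1:n}) ≥ ∏_{j=1}^n P(w_j | w_{1:j-1}) · c(w_{1:j}) > 0. -/
import Mathlib


open scoped BigOperators
open Finset Filter

namespace GAD

/-- Marginal probability of the prefix `u` under a distribution `P` on length-`n` strings. -/
noncomputable def marg {α : Type*} [Fintype α] (n : ℕ) (P : List α → ℝ) (u : List α) : ℝ :=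
  ∑ v : Fin (n - u.length) → α, P (u ++ List.ofFn v)

/-- Marginal probability mass of completions of `u` that land in the language `L`. -/
noncomputable def margL {α : Type*} [Fintype α] (n : ℕ) (P : List α → ℝ) (L : Set (List α))
    (u : List α) : ℝ :=
  ∑ v : Fin (n - u.length) → α, L.indicator P (u ++ List.ofFn v)

/-- Next-token conditional `P(a | u)`. -/
noncomputable def cond {α : Type*} [Fintype α] (n : ℕ) (P : List α → ℝ) (u : List α) (a : α) : ℝ :=
  marg n P (u ++ [a]) / marg n P u

/-- Expected future grammaticality `c(u) = Σ_v P(v | u) · 1[u ++ v ∈ L]`. -/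
noncomputable def efg {α : Type*} [Fintype α] (n : ℕ) (P : List α → ℝ) (L : Set (List α))
    (u : List α) : ℝ :=
  margL n P L u / marg n P u

/-- `u` is a prefix of some string of the language `L`. -/
def inPrefix {α : Type*} (L : Set (List α)) (u : List α) : Prop := ∃ v, u ++ v ∈ L

/-- Total probability mass of the language: `P(L)`. -/
noncomputable def PL {α : Type*} [Fintype α] (n : ℕ) (P : List α → ℝ) (L : Set (List α)) : ℝ :=
  margL n P L []

open Classical in
/-- ASAp approximation of expected future grammaticality, with fuel = remaining length. -/
noncomputable def ctildeAux {α : Type*} [Fintype α] (n : ℕ) (P : List α → ℝ) (L : Set (List α))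
    (S : Finset (List α)) : ℕ → List α → ℝ
  | 0, u => Set.indicator L (fun _ => (1 : ℝ)) u
  | (k + 1), u =>
      if ∃ s ∈ S, u <+: s then
        ∑ a : α, cond n P u a * ctildeAux n P L S k (u ++ [a])
      else Set.indicator {t | inPrefix L t} (fun _ => (1 : ℝ)) u

/-- ASAp overapproximation `c̃_S`. -/
noncomputable def ctilde {α : Type*} [Fintype α] (n : ℕ) (P : List α → ℝ) (L : Set (List α))
    (S : Finset (List α)) (u : List α) : ℝ :=
  ctildeAux n P L S (n - u.length) u

/-- The ASAp sampling distribution `Q̃_S`, as a product of reweighted left-to-right conditionals. -/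
noncomputable def QtildeS {α : Type*} [Fintype α] (n : ℕ) (P : List α → ℝ) (L : Set (List α))
    (S : Finset (List α)) (w : Fin n → α) : ℝ :=
  ∏ i : Fin n,
    cond n P ((List.ofFn w).take i) (w i) * ctilde n P L S ((List.ofFn w).take i ++ [w i]) /
      ∑ a : α, cond n P ((List.ofFn w).take i) a * ctilde n P L S ((List.ofFn w).take i ++ [a])

section Aux
variable {α : Type*} [Fintype α]

lemma sum_fn_succ (m : ℕ) (f : (Fin (m+1) → α) → ℝ) :
    ∑ v : Fin (m+1) → α, f v = ∑ a : α, ∑ v : Fin m → α, f (Fin.cons a v) := by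
  rw [← (Fin.consEquiv (fun _ : Fin (m+1) => α)).sum_comp f, Fintype.sum_prod_type]
  rfl

lemma marg_eq_self (n : ℕ) (P : List α → ℝ) (u : List α) (h : u.length = n) :
    marg n P u = P u := by
  unfold marg
  rw [show n - u.length = 0 by omega, Fintype.sum_unique]
  simp

lemma marg_succ (n : ℕ) (P : List α → ℝ) (u : List α) (h : u.length < n) :
    marg n P u = ∑ a : α, marg n P (u ++ [a]) := by
  unfold marg
  rw [show n - u.length = (n - (u.length+1)) + 1 by omega, sum_fn_succ]
  apply Finset.sum_congr rfl
  intro a _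
  rw [show n - (u ++ [a]).length = n - (u.length + 1) by simp]
  apply Finset.sum_congr rfl
  intro v _
  congr 1
  simp [List.ofFn_succ]

lemma margL_succ (n : ℕ) (P : List α → ℝ) (L : Set (List α)) (u : List α) (h : u.length < n) :
    margL n P L u = ∑ a : α, margL n P L (u ++ [a]) :=
  marg_succ n (L.indicator P) u h

lemma marg_nonneg (n : ℕ) (P : List α → ℝ) (hP : ∀ w, 0 ≤ P w) (u : List α) :
    0 ≤ marg n P u :=
  Finset.sum_nonneg fun _ _ => hP _

lemma margL_nonneg (n : ℕ) (P : List α → ℝ) (L : Set (List α)) (hP : ∀ w, 0 ≤ P w)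
    (u : List α) : 0 ≤ margL n P L u :=
  Finset.sum_nonneg fun _ _ => Set.indicator_nonneg (fun x _ => hP x) _

lemma cond_nonneg (n : ℕ) (P : List α → ℝ) (hP : ∀ w, 0 ≤ P w) (u : List α) (a : α) :
    0 ≤ cond n P u a :=
  div_nonneg (marg_nonneg n P hP _) (marg_nonneg n P hP _)

lemma margL_le_marg (n : ℕ) (P : List α → ℝ) (L : Set (List α)) (hP : ∀ w, 0 ≤ P w)
    (u : List α) : margL n P L u ≤ marg n P u :=
  Finset.sum_le_sum fun v _ => Set.indicator_le_self' (fun x _ => hP x) _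

lemma efg_nonneg (n : ℕ) (P : List α → ℝ) (L : Set (List α)) (hP : ∀ w, 0 ≤ P w)
    (u : List α) : 0 ≤ efg n P L u :=
  div_nonneg (margL_nonneg n P L hP _) (marg_nonneg n P hP _)

lemma efg_le_one (n : ℕ) (P : List α → ℝ) (L : Set (List α)) (hP : ∀ w, 0 ≤ P w)
    (u : List α) (hm : 0 < marg n P u) : efg n P L u ≤ 1 :=
  div_le_one_of_le₀ (margL_le_marg n P L hP u) hm.le

lemma sum_cond (n : ℕ) (P : List α → ℝ)
    (hmarg : ∀ u : List α, u.length ≤ n → 0 < marg n P u)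
    (u : List α) (h : u.length < n) : ∑ a : α, cond n P u a = 1 := by
  unfold cond
  rw [← Finset.sum_div, ← marg_succ n P u h, div_self (ne_of_gt (hmarg u h.le))]

lemma efg_succ (n : ℕ) (P : List α → ℝ) (L : Set (List α))
    (hmarg : ∀ u : List α, u.length ≤ n → 0 < marg n P u)
    (u : List α) (h : u.length < n) :
    efg n P L u = ∑ a : α, cond n P u a * efg n P L (u ++ [a]) := by
  have key : ∀ a : α, cond n P u a * efg n P L (u ++ [a])
      = margL n P L (u ++ [a]) / marg n P u := by
    intro a
    have h1 : marg n P (u ++ [a]) ≠ 0 :=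
      ne_of_gt (hmarg _ (by simp; omega))
    unfold cond efg
    rw [div_mul_div_comm, mul_comm (marg n P u),
      mul_div_mul_left _ _ h1]
  rw [Finset.sum_congr rfl (fun a _ => key a), ← Finset.sum_div,
    ← margL_succ n P L u h]
  rfl

lemma ctildeAux_nonneg (n : ℕ) (P : List α → ℝ) (L : Set (List α)) (S : Finset (List α))
    (hP : ∀ w, 0 ≤ P w) :
    ∀ (k : ℕ) (u : List α), 0 ≤ ctildeAux n P L S k u := by
  intro k
  induction k with
  | zero => intro u; exact Set.indicator_nonneg (fun _ _ => zero_le_one) u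
  | succ k ih =>
    intro u
    rw [ctildeAux]
    split_ifs
    · exact Finset.sum_nonneg fun a _ => mul_nonneg (cond_nonneg n P hP u a) (ih _)
    · exact Set.indicator_nonneg (fun _ _ => zero_le_one) u

lemma ctildeAux_le_one (n : ℕ) (P : List α → ℝ) (L : Set (List α)) (S : Finset (List α))
    (hP : ∀ w, 0 ≤ P w) (hmarg : ∀ u : List α, u.length ≤ n → 0 < marg n P u) :
    ∀ (k : ℕ) (u : List α), u.length + k = n → ctildeAux n P L S k u ≤ 1 := by
  intro k
  induction k with
  | zero =>
    intro u _
    classical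
    rw [ctildeAux, Set.indicator_apply]; split_ifs <;> norm_num
  | succ k ih =>
    intro u hu
    rw [ctildeAux]
    split_ifs
    · calc ∑ a : α, cond n P u a * ctildeAux n P L S k (u ++ [a])
          ≤ ∑ a : α, cond n P u a * 1 :=
            Finset.sum_le_sum fun a _ => mul_le_mul_of_nonneg_left
              (ih (u ++ [a]) (by simp; omega)) (cond_nonneg n P hP u a)
        _ = 1 := by
            simp only [mul_one]
            exact sum_cond n P hmarg u (by omega)
    · classical
      rw [Set.indicator_apply]; split_ifs <;> norm_num

lemma efg_le_ctildeAux (n : ℕ) (P : List α → ℝ) (L : Set (List α)) (S : Finset (List α))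
    (hP : ∀ w, 0 ≤ P w) (hmarg : ∀ u : List α, u.length ≤ n → 0 < marg n P u) :
    ∀ (k : ℕ) (u : List α), u.length + k = n →
    efg n P L u ≤ ctildeAux n P L S k u := by
  intro k
  induction k with
  | zero =>
    intro u hu
    have hPu : 0 < P u := by
      have := hmarg u (le_of_eq hu)
      rwa [marg_eq_self n P u hu] at this
    unfold efg
    rw [marg_eq_self n P u hu]
    rw [show margL n P L u = L.indicator P u from marg_eq_self n (L.indicator P) u hu]
    rw [ctildeAux]
    by_cases hu' : u ∈ L
    · rw [Set.indicator_of_mem hu', Set.indicator_of_mem hu']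
      exact div_self_le_one _
    · rw [Set.indicator_of_notMem hu', Set.indicator_of_notMem hu']
      simp
  | succ k ih =>
    intro u hu
    rw [ctildeAux]
    split_ifs with hif
    · rw [efg_succ n P L hmarg u (by omega)]
      exact Finset.sum_le_sum fun a _ => mul_le_mul_of_nonneg_left
        (ih (u ++ [a]) (by simp; omega)) (cond_nonneg n P hP u a)
    · by_cases hpre : inPrefix L u
      · have hmem : u ∈ {t | inPrefix L t} := hpre
        rw [Set.indicator_of_mem hmem]
        exact efg_le_one n P L hP u (hmarg u (by omega))
      · have hmem : u ∉ {t | inPrefix L t} := hpre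
        rw [Set.indicator_of_notMem hmem]
        have hm0 : margL n P L u = 0 := by
          apply Finset.sum_eq_zero
          intro v _
          apply Set.indicator_of_notMem
          intro hmem'
          exact hpre ⟨List.ofFn v, hmem'⟩
        unfold efg
        rw [hm0, zero_div]

lemma margL_pos (n : ℕ) (P : List α → ℝ) (L : Set (List α)) (hP : ∀ w, 0 ≤ P w)
    (u t : List α) (ht : u ++ t ∈ L) (hlen : t.length = n - u.length)
    (hPt : 0 < P (u ++ t)) : 0 < margL n P L u := by
  obtain ⟨v, hv⟩ : ∃ v : Fin (n - u.length) → α, List.ofFn v = t := by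
    rw [← hlen]
    exact ⟨t.get, List.ofFn_get t⟩
  have h1 : L.indicator P (u ++ List.ofFn v) ≤ margL n P L u :=
    Finset.single_le_sum (f := fun v : Fin (n - u.length) → α =>
      L.indicator P (u ++ List.ofFn v))
      (fun w _ => Set.indicator_nonneg (fun x _ => hP x) _) (Finset.mem_univ v)
  rw [hv, Set.indicator_of_mem ht] at h1
  exact lt_of_lt_of_le hPt h1

end Aux

/-- Lower bound on ASAp sampling probabilities: for `w ∈ L` with `Q(w) > 0`
and any finite `S ⊆ L`, each ASAp conditional is at least `P(w_j | w_{1:j-1})·c(w_{1:j})`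
(a positive constant independent of `S`), hence `Q̃_S(w) ≥ ∏_j P(w_j | w_{1:j-1})·c(w_{1:j}) > 0`. -/
theorem stmt13 {α : Type*} [Fintype α] (n : ℕ) (P : List α → ℝ) (L : Set (List α))
    (hP : ∀ w, 0 ≤ P w) (hL : ∀ w ∈ L, w.length = n)
    (hmarg : ∀ u : List α, u.length ≤ n → 0 < marg n P u)
    (S : Finset (List α)) (hS : ↑S ⊆ L)
    (w : Fin n → α) (hwL : List.ofFn w ∈ L)
    (hQ : 0 < L.indicator P (List.ofFn w) / PL n P L) :
    (∀ j : Fin n,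
        cond n P ((List.ofFn w).take j) (w j) * efg n P L ((List.ofFn w).take j ++ [w j]) ≤
          cond n P ((List.ofFn w).take j) (w j) *
              ctilde n P L S ((List.ofFn w).take j ++ [w j]) /
            ∑ a : α, cond n P ((List.ofFn w).take j) a *
              ctilde n P L S ((List.ofFn w).take j ++ [a])) ∧
    (∏ j : Fin n,
        cond n P ((List.ofFn w).take j) (w j) * efg n P L ((List.ofFn w).take j ++ [w j]))
      ≤ QtildeS n P L S w ∧
    0 < ∏ j : Fin n,
        cond n P ((List.ofFn w).take j) (w j) * efg n P L ((List.ofFn w).take j ++ [w j]) := by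
  have hn : (List.ofFn w).length = n := by simp
  have hPw : 0 < P (List.ofFn w) := by
    have := hmarg (List.ofFn w) (le_of_eq hn)
    rwa [marg_eq_self n P _ hn] at this
  have hlen : ∀ j : Fin n, ((List.ofFn w).take (j : ℕ)).length = (j : ℕ) := by
    intro j
    have := j.isLt
    simp only [List.length_take, List.length_ofFn]
    omega
  have hlen1 : ∀ j : Fin n, ∀ a : α, ((List.ofFn w).take (j : ℕ) ++ [a]).length = (j : ℕ) + 1 := by
    intro j a
    simp [hlen j]
  -- positivity of each lower-bound factor
  have hcondpos : ∀ j : Fin n, 0 < cond n P ((List.ofFn w).take (j : ℕ)) (w j) := by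
    intro j
    have := j.isLt
    exact div_pos (hmarg _ (by rw [hlen1 j]; omega)) (hmarg _ (by rw [hlen j]; omega))
  have htake : ∀ j : Fin n,
      (List.ofFn w).take (j : ℕ) ++ [w j] = (List.ofFn w).take ((j : ℕ) + 1) := by
    intro j
    rw [List.take_succ]
    congr 1
    simp [List.getElem?_ofFn, j.isLt]
  have hsplit : ∀ j : Fin n,
      ((List.ofFn w).take (j : ℕ) ++ [w j]) ++ (List.ofFn w).drop ((j : ℕ) + 1)
        = List.ofFn w := by
    intro j
    rw [htake j, List.take_append_drop]
  have hmargLpos : ∀ j : Fin n, 0 < margL n P L ((List.ofFn w).take (j : ℕ) ++ [w j]) := by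
    intro j
    apply margL_pos n P L hP _ ((List.ofFn w).drop ((j : ℕ) + 1))
      (by rw [hsplit j]; exact hwL)
      (by rw [List.length_drop, hn, hlen1 j])
      (by rw [hsplit j]; exact hPw)
  have hefgpos : ∀ j : Fin n, 0 < efg n P L ((List.ofFn w).take (j : ℕ) ++ [w j]) := by
    intro j
    have := j.isLt
    exact div_pos (hmargLpos j) (hmarg _ (by rw [hlen1 j]; omega))
  have hposj : ∀ j : Fin n,
      0 < cond n P ((List.ofFn w).take (j : ℕ)) (w j) *
        efg n P L ((List.ofFn w).take (j : ℕ) ++ [w j]) :=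
    fun j => mul_pos (hcondpos j) (hefgpos j)
  -- ctilde bounds
  have hct_nonneg : ∀ (u : List α), 0 ≤ ctilde n P L S u := fun u =>
    ctildeAux_nonneg n P L S hP _ u
  have hct_le_one : ∀ j : Fin n, ∀ a : α,
      ctilde n P L S ((List.ofFn w).take (j : ℕ) ++ [a]) ≤ 1 := by
    intro j a
    have := j.isLt
    exact ctildeAux_le_one n P L S hP hmarg _ _ (by rw [hlen1 j]; omega)
  have hct_ge : ∀ j : Fin n,
      efg n P L ((List.ofFn w).take (j : ℕ) ++ [w j]) ≤
        ctilde n P L S ((List.ofFn w).take (j : ℕ) ++ [w j]) := by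
    intro j
    have := j.isLt
    exact efg_le_ctildeAux n P L S hP hmarg _ _ (by rw [hlen1 j]; omega)
  -- denominator bounds
  have hD1 : ∀ j : Fin n,
      (∑ a : α, cond n P ((List.ofFn w).take (j : ℕ)) a *
        ctilde n P L S ((List.ofFn w).take (j : ℕ) ++ [a])) ≤ 1 := by
    intro j
    have := j.isLt
    calc (∑ a : α, cond n P ((List.ofFn w).take (j : ℕ)) a *
          ctilde n P L S ((List.ofFn w).take (j : ℕ) ++ [a]))
        ≤ ∑ a : α, cond n P ((List.ofFn w).take (j : ℕ)) a * 1 :=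
          Finset.sum_le_sum fun a _ => mul_le_mul_of_nonneg_left (hct_le_one j a)
            (cond_nonneg n P hP _ a)
      _ = 1 := by
          simp only [mul_one]
          exact sum_cond n P hmarg _ (by rw [hlen j]; omega)
  have hDpos : ∀ j : Fin n,
      0 < ∑ a : α, cond n P ((List.ofFn w).take (j : ℕ)) a *
        ctilde n P L S ((List.ofFn w).take (j : ℕ) ++ [a]) := by
    intro j
    have h1 : cond n P ((List.ofFn w).take (j : ℕ)) (w j) *
        ctilde n P L S ((List.ofFn w).take (j : ℕ) ++ [w j]) ≤
        ∑ a : α, cond n P ((List.ofFn w).take (j : ℕ)) a *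
          ctilde n P L S ((List.ofFn w).take (j : ℕ) ++ [a]) :=
      Finset.single_le_sum (f := fun a : α => cond n P ((List.ofFn w).take (j : ℕ)) a *
          ctilde n P L S ((List.ofFn w).take (j : ℕ) ++ [a]))
        (fun a _ => mul_nonneg (cond_nonneg n P hP _ a) (hct_nonneg _))
        (Finset.mem_univ (w j))
    have h2 : 0 < cond n P ((List.ofFn w).take (j : ℕ)) (w j) *
        ctilde n P L S ((List.ofFn w).take (j : ℕ) ++ [w j]) :=
      mul_pos (hcondpos j) (lt_of_lt_of_le (hefgpos j) (hct_ge j))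
    exact lt_of_lt_of_le h2 h1
  -- first claim
  have claim1 : ∀ j : Fin n,
      cond n P ((List.ofFn w).take (j : ℕ)) (w j) *
          efg n P L ((List.ofFn w).take (j : ℕ) ++ [w j]) ≤
        cond n P ((List.ofFn w).take (j : ℕ)) (w j) *
            ctilde n P L S ((List.ofFn w).take (j : ℕ) ++ [w j]) /
          ∑ a : α, cond n P ((List.ofFn w).take (j : ℕ)) a *
            ctilde n P L S ((List.ofFn w).take (j : ℕ) ++ [a]) := by
    intro j
    have step1 : cond n P ((List.ofFn w).take (j : ℕ)) (w j) *
        efg n P L ((List.ofFn w).take (j : ℕ) ++ [w j]) ≤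
        cond n P ((List.ofFn w).take (j : ℕ)) (w j) *
        ctilde n P L S ((List.ofFn w).take (j : ℕ) ++ [w j]) :=
      mul_le_mul_of_nonneg_left (hct_ge j) (hcondpos j).le
    refine le_trans step1 ?_
    rw [le_div_iff₀ (hDpos j)]
    exact mul_le_of_le_one_right
      (mul_nonneg (cond_nonneg n P hP _ _) (hct_nonneg _)) (hD1 j)
  refine ⟨claim1, ?_, Finset.prod_pos fun j _ => hposj j⟩
  rw [QtildeS]
  exact Finset.prod_le_prod (fun j _ => (hposj j).le) (fun j _ => claim1 j)


end GAD
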